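/- Every spinor-vector matrix A = [[s₁, v₁], [v₂, s₂]] (with s₁, s₂ spinors and v₁, v₂ vectors in the quaternions) that is self-adjoint (s₁, s₂ real and v₂ = -v₁) has only real eigenvalues, the two eigenvalues being (s₁ + s₂ ± √((s₁-s₂)² - 4v₁²))/2, and note -4v₁² = 4|v₁|² ≥ 0 so the discriminant is nonnegative. -/

import Mathlib

noncomputable section

abbrev Q2 : Type := Quaternion ℝ

/-- A self-adjoint spinor-vector matrix A = [[s₁, v₁], [-v₁, s₂]] (s₁, s₂ real scalars,
v₁ a vector) has only real eigenvalues.  Its eigenvalues, as in the general SV eigenvalue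
formula λ = (s₁ + conj(s₂) ± √((s₁-conj(s₂))² + 4v₁v₂))/2, are
(s₁ + s₂ ± √((s₁-s₂)² + 4|v₁|²))/2, where the discriminant (s₁-s₂)² - 4v₁² =
(s₁-s₂)² + 4|v₁|² is nonnegative since -4v₁² = 4|v₁|².  An eigenvalue is a spinor
λ ∈ Λ₀⊕Λ₂ with Ax = xλ for some nonzero x = (xₛ, x_v)ᵀ ∈ Z. -/
theorem selfadjoint_SV_eigenvalues (s1 s2 : ℝ) (v1 : Q2)
    (hv1 : v1.re = 0 ∧ v1.imK = 0)
    (lam : Q2) (hlam : lam.imI = 0 ∧ lam.imJ = 0)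
    (xs xv : Q2) (hxs : xs.imI = 0 ∧ xs.imJ = 0) (hxv : xv.re = 0 ∧ xv.imK = 0)
    (hx : ¬(xs = 0 ∧ xv = 0))
    (h1 : (s1 : Q2) * xs + v1 * xv = xs * lam)
    (h2 : (-v1) * xs + (s2 : Q2) * xv = xv * lam) :
    (-(4 : Q2) * v1 ^ 2 = ((4 * ‖v1‖ ^ 2 : ℝ) : Q2)) ∧
    (0 ≤ (s1 - s2) ^ 2 + 4 * ‖v1‖ ^ 2) ∧
    (lam = (((s1 + s2 + Real.sqrt ((s1 - s2) ^ 2 + 4 * ‖v1‖ ^ 2)) / 2 : ℝ) : Q2) ∨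
     lam = (((s1 + s2 - Real.sqrt ((s1 - s2) ^ 2 + 4 * ‖v1‖ ^ 2)) / 2 : ℝ) : Q2)) := by
  obtain ⟨hv0, hvK⟩ := hv1
  obtain ⟨hl1, hl2⟩ := hlam
  obtain ⟨hxs1, hxs2⟩ := hxs
  obtain ⟨hxv0, hxvK⟩ := hxv
  set p := v1.imI with hp
  set q := v1.imJ with hq
  set c := xs.re with hc
  set d := xs.imK with hd
  set e := xv.imI with he
  set f := xv.imJ with hf
  set l := lam.re with hl
  set m := lam.imK with hm
  have hnorm : ‖v1‖ ^ 2 = p ^ 2 + q ^ 2 := by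
    rw [sq, ← Quaternion.normSq_eq_norm_mul_self, Quaternion.normSq_def', hv0, hvK]
    ring
  -- extract real component equations
  rw [Quaternion.ext_iff] at h1 h2
  simp only [Quaternion.re_add, Quaternion.imI_add, Quaternion.imJ_add, Quaternion.imK_add,
    Quaternion.re_mul, Quaternion.imI_mul, Quaternion.imJ_mul, Quaternion.imK_mul,
    Quaternion.re_neg, Quaternion.imI_neg, Quaternion.imJ_neg, Quaternion.imK_neg,
    Quaternion.re_coe, Quaternion.imI_coe, Quaternion.imJ_coe, Quaternion.imK_coe,
    hv0, hvK, hl1, hl2, hxs1, hxs2, hxv0, hxvK, ← hp, ← hq, ← hc, ← hd, ← he, ← hf,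
    ← hl, ← hm] at h1 h2
  obtain ⟨E1, -, -, E2⟩ := h1
  obtain ⟨-, E3, E4, -⟩ := h2
  have hxne : c ^ 2 + d ^ 2 + e ^ 2 + f ^ 2 ≠ 0 := by
    intro h0
    apply hx
    have hc0 : c = 0 := by
      have : c ^ 2 = 0 := by linarith [sq_nonneg c, sq_nonneg d, sq_nonneg e, sq_nonneg f]
      exact sq_eq_zero_iff.mp this
    have hd0 : d = 0 := by
      have : d ^ 2 = 0 := by linarith [sq_nonneg c, sq_nonneg d, sq_nonneg e, sq_nonneg f]
      exact sq_eq_zero_iff.mp this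
    have he0 : e = 0 := by
      have : e ^ 2 = 0 := by linarith [sq_nonneg c, sq_nonneg d, sq_nonneg e, sq_nonneg f]
      exact sq_eq_zero_iff.mp this
    have hf0 : f = 0 := by
      have : f ^ 2 = 0 := by linarith [sq_nonneg c, sq_nonneg d, sq_nonneg e, sq_nonneg f]
      exact sq_eq_zero_iff.mp this
    constructor
    · rw [Quaternion.ext_iff]
      exact ⟨hc0, hxs1, hxs2, hd0⟩
    · rw [Quaternion.ext_iff]
      exact ⟨hxv0, he0, hf0, hxvK⟩
  -- K, L : real and imaginary part of (s1-λ)(s2-λ) - |v|²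
  have T1 : ((s1 - l) * (s2 - l) - m ^ 2 - p ^ 2 - q ^ 2) * c
      - (m * (2 * l - s1 - s2)) * d = 0 := by
    linear_combination (s2 - l) * E1 + m * E2 + p * E3 + q * E4
  have T2 : ((s1 - l) * (s2 - l) - m ^ 2 - p ^ 2 - q ^ 2) * d
      + (m * (2 * l - s1 - s2)) * c = 0 := by
    linear_combination (s2 - l) * E2 - m * E1 + q * E3 - p * E4
  have T3 : ((s1 - l) * (s2 - l) - m ^ 2 - p ^ 2 - q ^ 2) * e
      + (m * (2 * l - s1 - s2)) * f = 0 := by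
    linear_combination (s1 - l) * E3 - m * E4 + p * E1 + q * E2
  have T4 : ((s1 - l) * (s2 - l) - m ^ 2 - p ^ 2 - q ^ 2) * f
      - (m * (2 * l - s1 - s2)) * e = 0 := by
    linear_combination (s1 - l) * E4 + m * E3 + q * E1 - p * E2
  set K : ℝ := (s1 - l) * (s2 - l) - m ^ 2 - p ^ 2 - q ^ 2 with hKd
  set L : ℝ := m * (2 * l - s1 - s2) with hLd
  have key : (K ^ 2 + L ^ 2) * (c ^ 2 + d ^ 2 + e ^ 2 + f ^ 2) = 0 := by
    linear_combination (K * c - L * d) * T1 + (K * d + L * c) * T2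
      + (K * e + L * f) * T3 + (K * f - L * e) * T4
  have hKL2 : K ^ 2 + L ^ 2 = 0 := by
    rcases mul_eq_zero.mp key with h | h
    · exact h
    · exact absurd h hxne
  have hK0 : K = 0 := by
    have : K ^ 2 = 0 := by linarith [hKL2, sq_nonneg K, sq_nonneg L]
    exact sq_eq_zero_iff.mp this
  have hL0 : L = 0 := by
    have : L ^ 2 = 0 := by linarith [hKL2, sq_nonneg K, sq_nonneg L]
    exact sq_eq_zero_iff.mp this
  rw [hKd] at hK0
  rw [hLd] at hL0
  have hm0 : m = 0 := by
    by_contra hmm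
    have hm2 : 0 < m ^ 2 := lt_of_le_of_ne (sq_nonneg m) (Ne.symm (pow_ne_zero 2 hmm))
    have h2l : 2 * l - s1 - s2 = 0 := by
      rcases mul_eq_zero.mp hL0 with h | h
      · exact absurd h hmm
      · exact h
    have hs : s2 - l = -(s1 - l) := by linarith
    have hprod : (s1 - l) * (s2 - l) = -((s1 - l) ^ 2) := by rw [hs]; ring
    linarith [hK0, hprod, hm2, sq_nonneg (s1 - l), sq_nonneg p, sq_nonneg q]
  rw [hnorm]
  have hD : (0:ℝ) ≤ (s1 - s2) ^ 2 + 4 * (p ^ 2 + q ^ 2) := by positivity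
  have hsq := Real.sq_sqrt hD
  refine ⟨?_, hD, ?_⟩
  · -- -4 v1² = 4|v1|²
    have hv2 : v1 ^ 2 = ((-(p ^ 2 + q ^ 2) : ℝ) : Q2) := by
      rw [sq, Quaternion.ext_iff]
      simp only [Quaternion.re_mul, Quaternion.imI_mul, Quaternion.imJ_mul, Quaternion.imK_mul,
        Quaternion.re_coe, Quaternion.imI_coe, Quaternion.imJ_coe, Quaternion.imK_coe,
        hv0, hvK, ← hp, ← hq]
      refine ⟨by ring, by ring, by ring, by ring⟩
    have h4 : -(4 : Q2) = ((-4 : ℝ) : Q2) := by norm_cast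
    rw [h4, hv2, ← Quaternion.coe_mul]
    exact congrArg _ (by ring)
  · -- eigenvalue formula
    set D := (s1 - s2) ^ 2 + 4 * (p ^ 2 + q ^ 2) with hDdef
    have hfac : (2 * l - s1 - s2 - Real.sqrt D) * (2 * l - s1 - s2 + Real.sqrt D) = 0 := by
      have h2 : (2 * l - s1 - s2) ^ 2 = D := by
        rw [hDdef]; linear_combination 4 * hK0 + 4 * m * hm0
      linear_combination h2 - hsq
    rcases mul_eq_zero.mp hfac with h | h
    · left
      rw [Quaternion.ext_iff]
      refine ⟨?_, ?_, ?_, ?_⟩ <;>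
        simp only [Quaternion.re_coe, Quaternion.imI_coe, Quaternion.imJ_coe,
          Quaternion.imK_coe, hl1, hl2, ← hl, ← hm, hm0]
      linarith
    · right
      rw [Quaternion.ext_iff]
      refine ⟨?_, ?_, ?_, ?_⟩ <;>
        simp only [Quaternion.re_coe, Quaternion.imI_coe, Quaternion.imJ_coe,
          Quaternion.imK_coe, hl1, hl2, ← hl, ← hm, hm0]
      linarith
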